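/- Let T > 0 and let m₁, S be nonnegative functions in L¹((0,T)) with S > 0 a.e., and m₂ a nonnegative function in L²((0,T)). Suppose f and G are nonnegative functions on (0,T), with f absolutely continuous on [0,T), f(0) = 0, satisfying f'(t) + G(t) ≤ m₁(t) f(t) + m₂(t) [f(t) G(t) log⁺(S(t)/G(t))]^{1/2} a.e. on (0,T), where log⁺ z = max{0, log z} and G log⁺(S/G) is interpreted as its limit 0 when G = 0. Then f ≡ 0 on [0,T). -/

import Mathlib

open MeasureTheory Set

noncomputable def Om (y : ℝ) : ℝ := y + y * max 0 (Real.log (1 / y))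

lemma logpos_le {x : ℝ} (hx : 0 ≤ x) : max 0 (Real.log x) ≤ x := by
  rcases eq_or_lt_of_le hx with h | h
  · simp [← h]
  · exact max_le h.le ((Real.log_le_sub_one_of_pos h).trans (by linarith))

lemma logpos_mul {u v : ℝ} (hu : 0 ≤ u) (hv : 0 ≤ v) :
    max 0 (Real.log (u * v)) ≤ max 0 (Real.log u) + max 0 (Real.log v) := by
  by_cases h : u * v ≤ 1
  · have h1 : Real.log (u * v) ≤ 0 := Real.log_nonpos (by positivity) h
    have := le_max_left (0:ℝ) (Real.log u)
    have := le_max_left (0:ℝ) (Real.log v)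
    simp only [max_le_iff]
    constructor <;> [linarith; linarith]
  · push_neg at h
    have hu0 : 0 < u := by
      rcases eq_or_lt_of_le hu with h' | h' 
      · exfalso; rw [← h'] at h; simp at h; linarith
      · exact h'
    have hv0 : 0 < v := by
      rcases eq_or_lt_of_le hv with h' | h'
      · exfalso; rw [← h'] at h; simp at h; linarith
      · exact h'
    rw [Real.log_mul hu0.ne' hv0.ne']
    have h2 : Real.log u ≤ max 0 (Real.log u) := le_max_right _ _
    have h3 : Real.log v ≤ max 0 (Real.log v) := le_max_right _ _
    have h4 : (0:ℝ) ≤ max 0 (Real.log u) := le_max_left _ _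
    have h5 : (0:ℝ) ≤ max 0 (Real.log v) := le_max_left _ _
    simp only [max_le_iff]
    constructor <;> linarith

lemma Om_nonneg {y : ℝ} (hy : 0 ≤ y) : 0 ≤ Om y := by
  unfold Om
  have : (0:ℝ) ≤ max 0 (Real.log (1/y)) := le_max_left _ _
  nlinarith

lemma le_Om {y : ℝ} (hy : 0 ≤ y) : y ≤ Om y := by
  unfold Om
  have : (0:ℝ) ≤ max 0 (Real.log (1/y)) := le_max_left _ _
  nlinarith

lemma Om_le_add_one {y : ℝ} (hy : 0 ≤ y) : Om y ≤ y + 1 := by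
  unfold Om
  rcases eq_or_lt_of_le hy with h | h
  · simp [← h]
  · have h1 : max 0 (Real.log (1/y)) ≤ 1/y := logpos_le (by positivity)
    have h2 : y * max 0 (Real.log (1/y)) ≤ y * (1/y) := by
      apply mul_le_mul_of_nonneg_left h1 hy
    rw [mul_one_div, div_self h.ne'] at h2
    linarith

lemma Om_le_comp {u v : ℝ} (hu : 0 ≤ u) (huv : u ≤ v) (hv1 : v ≤ 1) (hv : 0 < v) :
    Om u ≤ v * (2 + Real.log (1 / v)) := by
  have hlv : 0 ≤ Real.log (1 / v) := Real.log_nonneg (by rw [le_div_iff₀ hv]; linarith)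
  rcases eq_or_lt_of_le hu with h | h
  · rw [← h]; unfold Om; simp only [zero_mul, add_zero, zero_add]
    positivity
  · unfold Om
    have hdecomp : (1:ℝ)/u = (v/u) * (1/v) := by field_simp
    have h1 : max 0 (Real.log (1/u)) ≤ max 0 (Real.log (v/u)) + max 0 (Real.log (1/v)) := by
      rw [hdecomp]; exact logpos_mul (by positivity) (by positivity)
    have h2 : u * max 0 (Real.log (v/u)) ≤ v := by
      have h3 : max 0 (Real.log (v/u)) ≤ v/u := logpos_le (by positivity)
      have h4 : u * max 0 (Real.log (v/u)) ≤ u * (v/u) := mul_le_mul_of_nonneg_left h3 hu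
      rw [mul_div_cancel₀] at h4
      · exact h4
      · exact h.ne'
    have h5 : u * max 0 (Real.log (1/u)) ≤ u * (max 0 (Real.log (v/u)) + max 0 (Real.log (1/v))) :=
      mul_le_mul_of_nonneg_left h1 hu
    have h6 : u * max 0 (Real.log (1/v)) ≤ v * max 0 (Real.log (1/v)) :=
      mul_le_mul_of_nonneg_right huv (le_max_left _ _)
    have h7 : max 0 (Real.log (1/v)) = Real.log (1/v) := max_eq_right hlv
    nlinarith [h5, h6, h2]

lemma mono_aux {F F' : ℝ → ℝ} (hd : ∀ x, HasDerivAt F (F' x) x)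
    (h0 : ∀ x, 0 ≤ x → 0 ≤ F' x) {x : ℝ} (hx : 0 ≤ x) : F 0 ≤ F x := by
  have hdiff : Differentiable ℝ F := fun y => (hd y).differentiableAt
  have hm : MonotoneOn F (Ici (0:ℝ)) := by
    refine monotoneOn_of_deriv_nonneg (convex_Ici 0) hdiff.continuous.continuousOn
      (fun y _ => (hdiff y).differentiableWithinAt) ?_
    intro y hy
    rw [interior_Ici] at hy
    rw [(hd y).deriv]
    exact h0 y hy.le
  exact hm self_mem_Ici hx hx

lemma exp_neg_deriv (y : ℝ) : HasDerivAt (fun z : ℝ => Real.exp (-z)) (-Real.exp (-y)) y := by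
  have h := (Real.hasDerivAt_exp (-y)).comp y (hasDerivAt_neg y)
  exact h.congr_deriv (by ring)

lemma exp_neg_le {x : ℝ} (hx : 0 ≤ x) : Real.exp (-x) ≤ 1 - x + x^2/2 := by
  have hd : ∀ y : ℝ, HasDerivAt (fun z => 1 - z + z^2/2 - Real.exp (-z))
      (y - 1 + Real.exp (-y)) y := by
    intro y
    have h1 : HasDerivAt (fun z : ℝ => 1 - z + z^2/2) (-1 + y) y := by
      have hsq : HasDerivAt (fun z : ℝ => z^2) (2*y) y := by simpa using hasDerivAt_pow 2 y
      have := ((hasDerivAt_const y (1:ℝ)).sub (hasDerivAt_id y)).add (hsq.div_const 2)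
      exact this.congr_deriv (by ring)
    have := h1.sub (exp_neg_deriv y)
    exact this.congr_deriv (by ring)
  have h2 := mono_aux hd (fun y hy => by nlinarith [Real.add_one_le_exp (-y)]) hx
  simp at h2
  linarith

lemma exp_neg_ge {x : ℝ} (hx : 0 ≤ x) : 1 - x + x^2/2 - x^3/6 ≤ Real.exp (-x) := by
  have hd : ∀ y : ℝ, HasDerivAt (fun z => Real.exp (-z) - (1 - z + z^2/2 - z^3/6))
      (-Real.exp (-y) + 1 - y + y^2/2) y := by
    intro y
    have hsq : HasDerivAt (fun z : ℝ => z^2) (2*y) y := by simpa using hasDerivAt_pow 2 y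
    have hcu : HasDerivAt (fun z : ℝ => z^3) (3*y^2) y := by simpa using hasDerivAt_pow 3 y
    have h1 : HasDerivAt (fun z : ℝ => 1 - z + z^2/2 - z^3/6) (-1 + y - y^2/2) y := by
      have := (((hasDerivAt_const y (1:ℝ)).sub (hasDerivAt_id y)).add (hsq.div_const 2)).sub
        (hcu.div_const 6)
      exact this.congr_deriv (by ring)
    have := (exp_neg_deriv y).sub h1
    exact this.congr_deriv (by ring)
  have h2 := mono_aux hd (fun y hy => by nlinarith [exp_neg_le hy]) hx
  simp at h2
  linarith

lemma cubic_le_exp {x : ℝ} (hx : 0 ≤ x) : 1 + x + x^2/2 + x^3/6 ≤ Real.exp x := by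
  have h := Real.sum_le_exp_of_nonneg hx 4
  norm_num [Finset.sum_range_succ, Nat.factorial] at h
  linarith

noncomputable def Psi (p z : ℝ) : ℝ := Real.exp (2 - p * Real.exp (-z))
noncomputable def DPsi (p z : ℝ) : ℝ := p * Real.exp (-z) * Psi p z

lemma mono_core {qa qb : ℝ} (h1 : 1 ≤ qb) (hq : qb ≤ qa) :
    qa * Real.exp (2 - qa) ≤ qb * Real.exp (2 - qb) := by
  have e1 : Real.exp (2 - qa) = Real.exp (2 - qb) * Real.exp (qb - qa) := by
    rw [← Real.exp_add]; ring_nf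
  have e2 : Real.exp (qa - qb) * Real.exp (qb - qa) = 1 := by
    rw [← Real.exp_add]; simp
  have h3 : qa - qb + 1 ≤ Real.exp (qa - qb) := Real.add_one_le_exp _
  have h5 : 0 < Real.exp (2 - qb) := Real.exp_pos _
  have h7 : qa ≤ qb * Real.exp (qa - qb) := by
    nlinarith [mul_nonneg (by linarith : (0:ℝ) ≤ qb - 1) (by linarith : (0:ℝ) ≤ qa - qb)]
  have h6 : qa * Real.exp (qb - qa) ≤ qb := by
    calc qa * Real.exp (qb - qa) ≤ (qb * Real.exp (qa - qb)) * Real.exp (qb - qa) :=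
          mul_le_mul_of_nonneg_right h7 (Real.exp_pos _).le
      _ = qb * (Real.exp (qa - qb) * Real.exp (qb - qa)) := by ring
      _ = qb := by rw [e2, mul_one]
  calc qa * Real.exp (2 - qa) = (qa * Real.exp (qb - qa)) * Real.exp (2 - qb) := by
        rw [e1]; ring
    _ ≤ qb * Real.exp (2 - qb) := mul_le_mul_of_nonneg_right h6 h5.le

lemma DPsi_mono {p a b : ℝ} (hab : a ≤ b) (hb : 1 ≤ p * Real.exp (-b)) :
    DPsi p a ≤ DPsi p b := by
  unfold DPsi Psi
  have hp : 0 < p := by nlinarith [Real.exp_pos (-b)]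
  have hq : p * Real.exp (-b) ≤ p * Real.exp (-a) :=
    mul_le_mul_of_nonneg_left (Real.exp_le_exp.2 (neg_le_neg hab)) hp.le
  exact mono_core hb hq

lemma conv_core {q r d : ℝ} (hd0 : 0 ≤ d) (hr2 : 2 ≤ r) (hq : q = r * Real.exp d) :
    q * d ≤ Real.exp (q - r) - 1 := by
  have hEd : 1 ≤ Real.exp d := Real.one_le_exp hd0
  have hD0 : 0 < Real.exp d := Real.exp_pos d
  have hq2 : 2 ≤ q := by
    have hA : 2 * Real.exp d ≤ r * Real.exp d := mul_le_mul_of_nonneg_right hr2 hD0.le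
    rw [hq]; linarith
  have hq0 : (0:ℝ) ≤ q := by linarith
  have hed : Real.exp (-d) * Real.exp d = 1 := by rw [← Real.exp_add]; simp
  have hE0 : 0 < Real.exp (-d) := Real.exp_pos _
  have hrq : r = q * Real.exp (-d) := by
    rw [hq, mul_assoc, mul_comm (Real.exp d), ← Real.exp_add]; simp
  have hqr : q - r = q * (1 - Real.exp (-d)) := by rw [hrq]; ring
  have hu0 : 0 ≤ q - r := by
    have := mul_le_mul_of_nonneg_left hEd (by linarith : (0:ℝ) ≤ r)
    rw [hq]; nlinarith
  have hT2 : 1 + (q-r) + (q-r)^2/2 ≤ Real.exp (q-r) := Real.quadratic_le_exp_of_nonneg hu0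
  have main : q * d ≤ (q - r) + (q - r)^2/2 := by
    rcases le_or_gt d 1 with hd1 | hd1
    · have h4 : Real.exp (-d) ≤ 1 - d + d^2/2 := exp_neg_le hd0
      have hu1 : q * (d - d^2/2) ≤ q - r := by
        have := mul_le_mul_of_nonneg_left
          (by linarith : d - d^2/2 ≤ 1 - Real.exp (-d)) hq0
        rw [hqr]; linarith
      have h5 : d * Real.exp (-d) ≤ 1 - Real.exp (-d) := by
        have h5a := mul_le_mul_of_nonneg_right (Real.add_one_le_exp d) hE0.le
        nlinarith
      have hu2 : 2*d ≤ q - r := by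
        have h5b := mul_le_mul_of_nonneg_left h5 hq0
        have h5c : q * (d * Real.exp (-d)) = d * (q * Real.exp (-d)) := by ring
        have h5d : d * 2 ≤ d * r := mul_le_mul_of_nonneg_left hr2 hd0
        rw [hqr]; rw [h5c, ← hrq] at h5b; linarith
      have h6 : d * (q - r) ≤ (q-r)^2/2 := by
        have := mul_le_mul_of_nonneg_right hu2 hu0
        nlinarith
      have h7 : d * (q * (d - d^2/2)) ≤ d * (q - r) := mul_le_mul_of_nonneg_left hu1 hd0
      have h8a : q*(d-d^2/2) + d*(q*(d-d^2/2)) = q*d + q*(d^2/2)*(1-d) - q*(d^3/2)*0 := by ring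
      have h8b : 0 ≤ q*(d^2/2)*(1-d) :=
        mul_nonneg (mul_nonneg hq0 (by positivity)) (by linarith)
      linarith
    · have hT3 : 1 + d + d^2/2 + d^3/6 ≤ Real.exp d := cubic_le_exp hd0
      have hT5 : 1 - d + d^2/2 - d^3/6 ≤ Real.exp (-d) := exp_neg_ge hd0
      have hcosh : d^2 + 2 ≤ Real.exp d + Real.exp (-d) := by linarith
      have h9 : Real.exp d * (1 - Real.exp (-d))^2 = Real.exp d - 2 + Real.exp (-d) := by
        linear_combination (Real.exp (-d) - 2) * hed
      have h10 : d^2 ≤ Real.exp d * (1 - Real.exp (-d))^2 := by rw [h9]; linarith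
      have hq2e : 2 * Real.exp d ≤ q := by
        have := mul_le_mul_of_nonneg_right hr2 hD0.le
        rw [hq]; linarith
      have h11 : (2*Real.exp d) * (1 - Real.exp (-d))^2 ≤ q * (1 - Real.exp (-d))^2 :=
        mul_le_mul_of_nonneg_right hq2e (sq_nonneg _)
      have h11b : (2*Real.exp d) * (1 - Real.exp (-d))^2
          = 2 * (Real.exp d * (1 - Real.exp (-d))^2) := by ring
      have h12 : 2 * d^2 ≤ q * (1 - Real.exp (-d))^2 := by rw [← h11b] at *; linarith
      have h13 : (q-r)^2 = q * (q * (1 - Real.exp (-d))^2) := by rw [hqr]; ring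
      have h14 : q * (2 * d^2) ≤ (q-r)^2 := by
        rw [h13]; exact mul_le_mul_of_nonneg_left h12 hq0
      have h15 : q * d ≤ q * d^2 := by
        apply mul_le_mul_of_nonneg_left _ hq0
        nlinarith
      nlinarith
  linarith

lemma DPsi_convex {p a b : ℝ} (hab : a ≤ b) (hb : 2 ≤ p * Real.exp (-b)) :
    DPsi p a * (b - a) ≤ Psi p b - Psi p a := by
  have hq : p * Real.exp (-a) = (p * Real.exp (-b)) * Real.exp (b - a) := by
    rw [mul_assoc, ← Real.exp_add]; ring_nf
  have key := conv_core (by linarith : (0:ℝ) ≤ b - a) hb hq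
  have hA : 0 < Real.exp (2 - p * Real.exp (-a)) := Real.exp_pos _
  have hPsiab : Real.exp (2 - p * Real.exp (-b)) =
      Real.exp (2 - p * Real.exp (-a)) * Real.exp (p * Real.exp (-a) - p * Real.exp (-b)) := by
    rw [← Real.exp_add]; ring_nf
  unfold DPsi Psi
  rw [hPsiab]
  have h2 := mul_le_mul_of_nonneg_left key hA.le
  nlinarith [h2]

lemma key_pointwise {a s g y : ℝ} (ha : 0 ≤ a) (hs : 0 ≤ s) (hg : 0 ≤ g) (hy : 0 ≤ y) :
    a * Real.sqrt (y * (if g = 0 then 0 else g * max 0 (Real.log (s / g)))) - g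
      ≤ (a ^ 2 + s) * Om y := by
  have hP0 : (0:ℝ) ≤ max 0 (Real.log (1/y)) := le_max_left _ _
  have hOm0 : 0 ≤ Om y := by unfold Om; nlinarith
  have hRHS : 0 ≤ (a^2 + s) * Om y := mul_nonneg (by positivity) hOm0
  by_cases hgz : g = 0
  · simp [hgz]; linarith
  rw [if_neg hgz]
  have hg0 : 0 < g := lt_of_le_of_ne hg (Ne.symm hgz)
  by_cases haz : a = 0
  · rw [haz]; simp
    nlinarith [mul_nonneg hs hOm0]
  have ha0 : 0 < a := lt_of_le_of_ne ha (Ne.symm haz)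
  by_cases hyz : y = 0
  · have hOm00 : Om 0 = 0 := by unfold Om; simp
    rw [hyz]; simp [hOm00]
    positivity
  have hy0 : 0 < y := lt_of_le_of_ne hy (Ne.symm hyz)
  set L := max 0 (Real.log (s / g)) with hL
  have hL0 : 0 ≤ L := le_max_left _ _
  set z := a^2 * y with hz
  have hz0 : 0 < z := by positivity
  have hBz : max 0 (Real.log (s / z)) ≤ max 0 (Real.log (s/a^2)) + max 0 (Real.log (1/y)) := by
    have hdec : s / z = (s/a^2) * (1/y) := by rw [hz]; field_simp
    rw [hdec]; exact logpos_mul (by positivity) (by positivity)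
  have hsa : a^2 * max 0 (Real.log (s/a^2)) ≤ s := by
    have h1 := logpos_le (x := s/a^2) (by positivity)
    have h2 := mul_le_mul_of_nonneg_left h1 (by positivity : (0:ℝ) ≤ a^2)
    rw [mul_div_cancel₀ _ (by positivity : (a:ℝ)^2 ≠ 0)] at h2
    exact h2
  rcases le_or_gt z g with hcase | hcase
  · -- large g case
    have hsq : a * Real.sqrt (y * (g * L)) ≤ (g + z * L)/2 := by
      have h1 : a * Real.sqrt (y * (g*L)) = Real.sqrt (a^2 * (y * (g*L))) := by
        rw [Real.sqrt_mul (sq_nonneg a), Real.sqrt_sq ha]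
      rw [h1]
      have h2 : a^2 * (y*(g*L)) = g * (z*L) := by rw [hz]; ring
      rw [h2]
      have h3 : g * (z*L) ≤ ((g + z*L)/2)^2 := by nlinarith [sq_nonneg (g - z*L)]
      calc Real.sqrt (g*(z*L)) ≤ Real.sqrt (((g+z*L)/2)^2) := Real.sqrt_le_sqrt h3
        _ = (g+z*L)/2 := Real.sqrt_sq (by positivity)
    have hLz : L ≤ max 0 (Real.log (s/z)) := by
      apply max_le (le_max_left _ _)
      rcases eq_or_lt_of_le hs with hs0 | hs0
      · rw [← hs0]; simp
      · have h4 : s / g ≤ s / z := by gcongr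
        exact (Real.log_le_log (by positivity) h4).trans (le_max_right _ _)
    have hzL : z * L ≤ s * y + z * max 0 (Real.log (1/y)) := by
      have h5 : L ≤ max 0 (Real.log (s/a^2)) + max 0 (Real.log (1/y)) := hLz.trans hBz
      have h6 := mul_le_mul_of_nonneg_left h5 hz0.le
      have h7 : z * max 0 (Real.log (s/a^2)) = y * (a^2 * max 0 (Real.log (s/a^2))) := by
        rw [hz]; ring
      have h8 : y * (a^2 * max 0 (Real.log (s/a^2))) ≤ y * s :=
        mul_le_mul_of_nonneg_left hsa hy
      nlinarith [h6]
    have hexp : (a^2 + s) * Om y = a^2*y + s*y + a^2*(y*max 0 (Real.log (1/y)))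
        + s*(y*max 0 (Real.log (1/y))) := by unfold Om; ring
    have hzP : z * max 0 (Real.log (1/y)) = a^2*(y * max 0 (Real.log (1/y))) := by
      rw [hz]; ring
    rw [hexp]
    linarith [hsq, hzL, mul_nonneg hs (mul_nonneg hy hP0), mul_nonneg (sq_nonneg a) hy,
      mul_nonneg hs hy, mul_nonneg (sq_nonneg a) (mul_nonneg hy hP0), hzP]
  · -- small g case
    have hgl : g * L ≤ z * (1 + max 0 (Real.log (s/z))) := by
      have h5 : L ≤ max 0 (Real.log (s/z)) + max 0 (Real.log (z/g)) := by
        have hdec2 : s/g = (s/z)*(z/g) := by field_simp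
        rw [hL, hdec2]; exact logpos_mul (by positivity) (by positivity)
      have h6 : g * max 0 (Real.log (z/g)) ≤ z := by
        have h6a := logpos_le (x := z/g) (by positivity)
        have h6b := mul_le_mul_of_nonneg_left h6a hg
        rw [mul_div_cancel₀ _ hg0.ne'] at h6b
        exact h6b
      have h7 : g * max 0 (Real.log (s/z)) ≤ z * max 0 (Real.log (s/z)) :=
        mul_le_mul_of_nonneg_right hcase.le (le_max_left _ _)
      have h8 := mul_le_mul_of_nonneg_left h5 hg
      nlinarith
    set B := max 0 (Real.log (s/z)) with hB
    have hB0 : (0:ℝ) ≤ B := le_max_left _ _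
    have hsq2 : a * Real.sqrt (y * (g * L)) ≤ a^2 * y * (1 + B) := by
      have h8 : y * (g*L) ≤ y * (z * (1+B)) := mul_le_mul_of_nonneg_left hgl hy
      have h9 : y * (z*(1+B)) = (a*y)^2 * (1+B) := by rw [hz]; ring
      have h10 : Real.sqrt (y*(g*L)) ≤ Real.sqrt ((a*y)^2 * (1+B)) :=
        Real.sqrt_le_sqrt (h9 ▸ h8)
      have h11 : Real.sqrt ((a*y)^2 * (1+B)) = (a*y) * Real.sqrt (1+B) := by
        rw [Real.sqrt_mul (sq_nonneg _), Real.sqrt_sq (by positivity)]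
      have h12 : Real.sqrt (1+B) ≤ 1 + B := by
        nlinarith [Real.sq_sqrt (by linarith : (0:ℝ) ≤ 1 + B), Real.sqrt_nonneg (1+B)]
      have h13 := (h10.trans_eq h11)
      have h14 : a * ((a*y) * Real.sqrt (1+B)) ≤ a * ((a*y)*(1+B)) := by
        apply mul_le_mul_of_nonneg_left _ ha
        exact mul_le_mul_of_nonneg_left h12 (by positivity)
      calc a * Real.sqrt (y*(g*L)) ≤ a * ((a*y) * Real.sqrt (1+B)) :=
            mul_le_mul_of_nonneg_left h13 ha
        _ ≤ a * ((a*y)*(1+B)) := h14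
        _ = a^2*y*(1+B) := by ring
    have h15 : a^2*y*B ≤ y * s + a^2*(y*max 0 (Real.log (1/y))) := by
      have h16 := mul_le_mul_of_nonneg_left hBz (by positivity : (0:ℝ) ≤ a^2*y)
      have h17 : a^2*y*max 0 (Real.log (s/a^2)) = y*(a^2 * max 0 (Real.log (s/a^2))) := by ring
      have h18 : y*(a^2 * max 0 (Real.log (s/a^2))) ≤ y * s := mul_le_mul_of_nonneg_left hsa hy
      linarith [h16, h17, h18]
    have hexp : (a^2 + s) * Om y = a^2*y + s*y + a^2*(y*max 0 (Real.log (1/y)))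
        + s*(y*max 0 (Real.log (1/y))) := by unfold Om; ring
    rw [hexp]
    linarith [hsq2, h15, mul_nonneg hs (mul_nonneg hy hP0)]

lemma star_lemma (k : ℝ → ℝ) (hk : Integrable k) (hk0 : ∀ x, 0 ≤ k x)
    {p τ : ℝ} (hτ : 0 < τ)
    (hq : 2 ≤ p * Real.exp (-(∫ x in (0:ℝ)..τ, k x))) :
    ∫ x in (0:ℝ)..τ, k x * DPsi p (∫ u in (0:ℝ)..x, k u)
      ≤ Psi p (∫ x in (0:ℝ)..τ, k x) - Psi p 0 := by
  set κ : ℝ → ℝ := fun t => ∫ x in (0:ℝ)..t, k x with hκ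
  have hii : ∀ a b : ℝ, IntervalIntegrable k volume a b := fun a b => hk.intervalIntegrable
  have κcont : Continuous κ := hk.continuous_primitive 0
  have κmono : Monotone κ := by
    intro x y hxy
    have h := intervalIntegral.integral_add_adjacent_intervals (hii 0 x) (hii x y)
    have h2 : 0 ≤ ∫ u in x..y, k u := intervalIntegral.integral_nonneg hxy (fun u _ => hk0 u)
    simp only [hκ]
    linarith [h]
  have κdiff : ∀ a b : ℝ, κ b - κ a = ∫ u in a..b, k u := by
    intro a b
    have h := intervalIntegral.integral_add_adjacent_intervals (hii 0 a) (hii a b)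
    simp only [hκ]
    linarith [h]
  have κ0 : κ 0 = 0 := intervalIntegral.integral_same
  have hκτ0 : 0 ≤ κ τ := by
    have := κmono hτ.le
    rw [κ0] at this; exact this
  have hp : 0 < p := by nlinarith [Real.exp_pos (-(κ τ))]
  have hDPsicont : Continuous (fun x => DPsi p (κ x)) := by
    unfold DPsi Psi
    fun_prop
  have hprod : ∀ a b : ℝ, IntervalIntegrable (fun x => k x * DPsi p (κ x)) volume a b :=
    fun a b => (hii a b).mul_continuousOn hDPsicont.continuousOn
  have hC0 : 0 ≤ DPsi p (κ τ) - DPsi p 0 := by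
    have := DPsi_mono hκτ0 (by linarith : 1 ≤ p * Real.exp (-(κ τ)))
    linarith
  refine le_of_forall_pos_le_add ?_
  intro ε hε
  set C := DPsi p (κ τ) - DPsi p 0 with hC
  set ε' := ε / (C + 1) with hε'
  have hε'0 : 0 < ε' := div_pos hε (by linarith)
  obtain ⟨δ, hδ0, hδ⟩ := Metric.uniformContinuousOn_iff.1
    ((isCompact_Icc (a := (0:ℝ)) (b := τ)).uniformContinuousOn_of_continuous
      κcont.continuousOn) ε' hε'0
  obtain ⟨n, hn⟩ := exists_nat_gt (τ / δ)
  have hn0 : 0 < n := by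
    have h1 : 0 < τ / δ := div_pos hτ hδ0
    exact_mod_cast h1.trans hn
  have hn0' : (0:ℝ) < n := by exact_mod_cast hn0
  have hτn : τ / n < δ := by
    rw [div_lt_iff₀ hn0']
    have := (div_lt_iff₀ hδ0).1 hn
    linarith [this]
  set a : ℕ → ℝ := fun i => i * (τ / n) with ha
  have ha0 : a 0 = 0 := by simp [ha]
  have han : a n = τ := by
    simp only [ha]; field_simp
  have hamono : ∀ i : ℕ, a i ≤ a (i+1) := by
    intro i
    simp only [ha]
    apply mul_le_mul_of_nonneg_right _ (by positivity)
    push_cast; linarith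
  have haIcc : ∀ i : ℕ, i ≤ n → a i ∈ Icc 0 τ := by
    intro i hi
    constructor
    · simp only [ha]; positivity
    · simp only [ha]
      calc (i:ℝ) * (τ/n) ≤ n * (τ/n) := by
            apply mul_le_mul_of_nonneg_right _ (by positivity)
            exact_mod_cast hi
        _ = τ := by field_simp
  have hsplit : ∫ x in (0:ℝ)..τ, k x * DPsi p (κ x)
      = ∑ i ∈ Finset.range n, ∫ x in a i..a (i+1), k x * DPsi p (κ x) := by
    rw [intervalIntegral.sum_integral_adjacent_intervals (fun i _ => hprod _ _), ha0, han]
  have hpiece : ∀ i ∈ Finset.range n,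
      (∫ x in a i..a (i+1), k x * DPsi p (κ x))
        ≤ (Psi p (κ (a (i+1))) - Psi p (κ (a i)))
          + (DPsi p (κ (a (i+1))) - DPsi p (κ (a i))) * ε' := by
    intro i hi
    have hi' : i + 1 ≤ n := Finset.mem_range.1 hi
    have hmem1 : a i ∈ Icc 0 τ := haIcc i (by omega)
    have hmem2 : a (i+1) ∈ Icc 0 τ := haIcc (i+1) hi'
    have hb2 : 2 ≤ p * Real.exp (-(κ (a (i+1)))) := by
      have h1 : κ (a (i+1)) ≤ κ τ := κmono hmem2.2
      have h2 : Real.exp (-(κ τ)) ≤ Real.exp (-(κ (a (i+1)))) := Real.exp_le_exp.2 (by linarith)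
      nlinarith
    have hmk : κ (a i) ≤ κ (a (i+1)) := κmono (hamono i)
    have h1 : (∫ x in a i..a (i+1), k x * DPsi p (κ x))
        ≤ ∫ x in a i..a (i+1), k x * DPsi p (κ (a (i+1))) := by
      apply intervalIntegral.integral_mono_on (hamono i) (hprod _ _) ((hii _ _).mul_const _)
      intro x hx
      exact mul_le_mul_of_nonneg_left
        (DPsi_mono (κmono hx.2) (by linarith : 1 ≤ p * Real.exp (-(κ (a (i+1)))))) (hk0 x)
    have h2 : (∫ x in a i..a (i+1), k x * DPsi p (κ (a (i+1))))
        = DPsi p (κ (a (i+1))) * (κ (a (i+1)) - κ (a i)) := by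
      rw [intervalIntegral.integral_mul_const, ← κdiff]; ring
    have h3 : DPsi p (κ (a i)) * (κ (a (i+1)) - κ (a i)) ≤ Psi p (κ (a (i+1))) - Psi p (κ (a i)) :=
      DPsi_convex hmk hb2
    have h4 : κ (a (i+1)) - κ (a i) ≤ ε' := by
      have hdist : dist (a i) (a (i+1)) < δ := by
        rw [Real.dist_eq]
        have he : a i - a (i+1) = -(τ/n) := by simp only [ha]; push_cast; ring
        rw [he, abs_neg, abs_of_nonneg (by positivity)]
        exact hτn
      have hd := hδ (a i) hmem1 (a (i+1)) hmem2 hdist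
      rw [Real.dist_eq] at hd
      have := abs_lt.1 hd
      linarith [this.1]
    have h5 : 0 ≤ DPsi p (κ (a (i+1))) - DPsi p (κ (a i)) := by
      linarith [DPsi_mono hmk (by linarith : 1 ≤ p * Real.exp (-(κ (a (i+1)))))]
    have h6 : 0 ≤ κ (a (i+1)) - κ (a i) := by linarith
    have h7 := mul_le_mul_of_nonneg_left h4 h5
    calc (∫ x in a i..a (i+1), k x * DPsi p (κ x))
        ≤ DPsi p (κ (a (i+1))) * (κ (a (i+1)) - κ (a i)) := h1.trans_eq h2
      _ = DPsi p (κ (a i)) * (κ (a (i+1)) - κ (a i))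
          + (DPsi p (κ (a (i+1))) - DPsi p (κ (a i))) * (κ (a (i+1)) - κ (a i)) := by ring
      _ ≤ (Psi p (κ (a (i+1))) - Psi p (κ (a i)))
          + (DPsi p (κ (a (i+1))) - DPsi p (κ (a i))) * ε' := by linarith
  have hsum := Finset.sum_le_sum hpiece
  rw [← hsplit] at hsum
  have htel1 : ∑ i ∈ Finset.range n, (Psi p (κ (a (i+1))) - Psi p (κ (a i)))
      = Psi p (κ τ) - Psi p 0 := by
    rw [Finset.sum_range_sub (fun i => Psi p (κ (a i))), ha0, han, κ0]
  have htel2 : ∑ i ∈ Finset.range n, (DPsi p (κ (a (i+1))) - DPsi p (κ (a i))) * ε'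
      = C * ε' := by
    rw [← Finset.sum_mul, Finset.sum_range_sub (fun i => DPsi p (κ (a i))), ha0, han, κ0]
  rw [Finset.sum_add_distrib, htel1, htel2] at hsum
  have hfin : C * ε' ≤ ε := by
    have h1 : C / (C + 1) ≤ 1 := by
      rw [div_le_one (by linarith)]; linarith
    calc C * ε' = (C/(C+1)) * ε := by rw [hε']; ring
      _ ≤ 1 * ε := mul_le_mul_of_nonneg_right h1 hε.le
      _ = ε := one_mul ε
  linarith

lemma star_lemma' (k κ : ℝ → ℝ) (hk : Integrable k) (hk0 : ∀ x, 0 ≤ k x)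
    (hκdef : ∀ t, κ t = ∫ x in (0:ℝ)..t, k x)
    {p τ : ℝ} (hτ : 0 < τ) (hq : 2 ≤ p * Real.exp (-(κ τ))) :
    ∫ x in (0:ℝ)..τ, k x * DPsi p (κ x) ≤ Psi p (κ τ) - Psi p 0 := by
  rw [hκdef] at hq
  have h := star_lemma k hk hk0 hτ hq
  simp only [hκdef]
  exact h

lemma osgood (t₀ : ℝ) (ht₀ : 0 < t₀) (k F : ℝ → ℝ)
    (hk : Integrable k) (hk0 : ∀ x, 0 ≤ k x)
    (hF : Continuous F) (hF0 : F 0 = 0)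
    (hFnn : ∀ t ∈ Icc 0 t₀, 0 ≤ F t)
    (hOmint : ∀ t ∈ Icc 0 t₀, IntegrableOn (fun x => k x * Om (F x)) (Ioo 0 t))
    (hineq : ∀ t ∈ Icc 0 t₀, F t ≤ ∫ x in Ioo 0 t, k x * Om (F x)) :
    ∀ t ∈ Icc 0 t₀, F t = 0 := by
  set κ : ℝ → ℝ := fun t => ∫ x in (0:ℝ)..t, k x with hκ
  have hκdef : ∀ t, κ t = ∫ x in (0:ℝ)..t, k x := fun t => rfl
  have hii : ∀ a b : ℝ, IntervalIntegrable k volume a b := fun a b => hk.intervalIntegrable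
  have κcont : Continuous κ := hk.continuous_primitive 0
  have κmono : Monotone κ := by
    intro x y hxy
    have h := intervalIntegral.integral_add_adjacent_intervals (hii 0 x) (hii x y)
    have h2 : 0 ≤ ∫ u in x..y, k u := intervalIntegral.integral_nonneg hxy (fun u _ => hk0 u)
    simp only [hκ]
    linarith [h]
  have κ0 : κ 0 = 0 := intervalIntegral.integral_same
  have main : ∀ ε : ℝ, 0 < ε → ε ≤ 1 → ∀ t ∈ Icc 0 t₀, F t < ε := by
    intro ε hε hε1
    have hN0 : 0 ≤ κ t₀ := by
      have := κmono ht₀.le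
      rw [κ0] at this; exact this
    have hlog : 0 ≤ Real.log (1/ε) := Real.log_nonneg (by rw [le_div_iff₀ hε]; linarith)
    set p := (2 + Real.log (1/ε)) * Real.exp (κ t₀) with hp
    have hp0 : 0 < p := mul_pos (by linarith) (Real.exp_pos _)
    have hpN : p * Real.exp (-(κ t₀)) = 2 + Real.log (1/ε) := by
      rw [hp, mul_assoc, ← Real.exp_add, add_neg_cancel, Real.exp_zero, mul_one]
    have hq2 : ∀ x ∈ Icc 0 t₀, 2 + Real.log (1/ε) ≤ p * Real.exp (-(κ x)) := by
      intro x hx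
      have h1 : κ x ≤ κ t₀ := κmono hx.2
      have h2 : Real.exp (-(κ t₀)) ≤ Real.exp (-(κ x)) := Real.exp_le_exp.2 (by linarith)
      rw [← hpN]
      exact mul_le_mul_of_nonneg_left h2 hp0.le
    have hY1 : ∀ x ∈ Icc 0 t₀, Psi p (κ x) ≤ ε := by
      intro x hx
      have h3 := hq2 x hx
      unfold Psi
      calc Real.exp (2 - p * Real.exp (-(κ x))) ≤ Real.exp (2 - (2 + Real.log (1/ε))) :=
            Real.exp_le_exp.2 (by linarith)
        _ = ε := by
            rw [show (2:ℝ) - (2 + Real.log (1/ε)) = - Real.log (1/ε) by ring,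
              one_div, Real.log_inv, neg_neg, Real.exp_log hε]
    have hYcont : Continuous (fun x => Psi p (κ x)) := by
      unfold Psi
      exact Real.continuous_exp.comp (continuous_const.sub (continuous_const.mul
        (Real.continuous_exp.comp κcont.neg)))
    have hDPsicont : Continuous (fun x => DPsi p (κ x)) := by
      unfold DPsi Psi
      exact ((continuous_const.mul (Real.continuous_exp.comp κcont.neg)).mul
        (Real.continuous_exp.comp (continuous_const.sub (continuous_const.mul
          (Real.continuous_exp.comp κcont.neg)))))
    by_contra hcon
    push_neg at hcon
    obtain ⟨t₁, ht₁, hFt₁⟩ := hcon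
    set Sb := {x | x ∈ Icc 0 t₀ ∧ Psi p (κ x) ≤ F x} with hSb
    have hne : Sb.Nonempty := ⟨t₁, ht₁, le_trans (hY1 t₁ ht₁) hFt₁⟩
    have hcl : IsClosed Sb := by
      have heq : Sb = Icc 0 t₀ ∩ {x | Psi p (κ x) ≤ F x} := rfl
      rw [heq]
      exact IsClosed.inter isClosed_Icc (isClosed_le hYcont hF)
    have hbdd : BddBelow Sb := ⟨0, fun x hx => hx.1.1⟩
    set c := sInf Sb with hc
    have hcS : c ∈ Sb := hcl.csInf_mem hne hbdd
    have hcI : c ∈ Icc 0 t₀ := hcS.1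
    have hc0 : 0 < c := by
      rcases eq_or_lt_of_le hcI.1 with h | h
      · exfalso
        have h1 := hcS.2
        rw [← h, κ0, hF0] at h1
        have := Real.exp_pos (2 - p * Real.exp (-(0:ℝ)))
        unfold Psi at h1
        linarith
      · exact h
    have hlt : ∀ x ∈ Ioo 0 c, F x ≤ Psi p (κ x) := by
      intro x hx
      have hxI : x ∈ Icc 0 t₀ := ⟨hx.1.le, hx.2.le.trans hcI.2⟩
      by_contra hcc
      push_neg at hcc
      have hxS : x ∈ Sb := ⟨hxI, hcc.le⟩
      exact absurd (csInf_le hbdd hxS) (not_le.2 hx.2)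
    have hint2 : IntegrableOn (fun x => k x * DPsi p (κ x)) (Ioo 0 c) := by
      have h1 := ((hii 0 c).mul_continuousOn hDPsicont.continuousOn)
      exact h1.1.mono_set Ioo_subset_Ioc_self
    have key : F c ≤ ∫ x in Ioo 0 c, k x * DPsi p (κ x) := by
      refine (hineq c hcI).trans ?_
      apply setIntegral_mono_on (hOmint c hcI) hint2 measurableSet_Ioo
      intro x hx
      have hxI : x ∈ Icc 0 t₀ := ⟨hx.1.le, hx.2.le.trans hcI.2⟩
      have hYx1 : Psi p (κ x) ≤ 1 := (hY1 x hxI).trans hε1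
      have hYx0 : 0 < Psi p (κ x) := Real.exp_pos _
      have h1 : Om (F x) ≤ Psi p (κ x) * (2 + Real.log (1 / Psi p (κ x))) :=
        Om_le_comp (hFnn x hxI) (hlt x hx) hYx1 hYx0
      have h2 : Psi p (κ x) * (2 + Real.log (1 / Psi p (κ x))) = DPsi p (κ x) := by
        simp only [DPsi, Psi]
        rw [one_div, Real.log_inv, Real.log_exp]
        ring
      rw [h2] at h1
      exact mul_le_mul_of_nonneg_left h1 (hk0 x)
    have hstar : ∫ x in Ioo 0 c, k x * DPsi p (κ x) ≤ Psi p (κ c) - Psi p 0 := by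
      have hb := hq2 c hcI
      have h := star_lemma' k κ hk hk0 hκdef hc0 (by linarith : 2 ≤ p * Real.exp (-(κ c)))
      have heq : ∫ x in Ioo 0 c, k x * DPsi p (κ x) = ∫ x in (0:ℝ)..c, k x * DPsi p (κ x) := by
        rw [intervalIntegral.integral_of_le hc0.le, integral_Ioc_eq_integral_Ioo]
      rw [heq]
      exact h
    have hPsi0 : 0 < Psi p 0 := Real.exp_pos _
    have hYc : Psi p (κ c) ≤ F c := hcS.2
    linarith
  intro t ht
  refine le_antisymm ?_ (hFnn t ht)
  by_contra hcon
  push_neg at hcon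
  have hmin : 0 < min (F t) 1 := lt_min hcon one_pos
  have h1 := main (min (F t) 1) hmin (min_le_right _ _) t ht
  have h2 := min_le_left (F t) 1
  linarith

theorem stmt1 (T : ℝ) (hT : 0 < T)
    (m₁ m₂ S f G f' : ℝ → ℝ)
    (hm₁0 : ∀ t ∈ Ioo 0 T, 0 ≤ m₁ t) (hm₂0 : ∀ t ∈ Ioo 0 T, 0 ≤ m₂ t)
    (hSnn : ∀ t ∈ Ioo 0 T, 0 ≤ S t)
    (hm₁ : IntegrableOn m₁ (Ioo 0 T)) (hS : IntegrableOn S (Ioo 0 T))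
    (hSpos : ∀ᵐ t ∂(volume.restrict (Ioo 0 T)), 0 < S t)
    (hm₂ : MemLp m₂ 2 (volume.restrict (Ioo 0 T)))
    (hf0 : ∀ t ∈ Ioo 0 T, 0 ≤ f t) (hG0 : ∀ t ∈ Ioo 0 T, 0 ≤ G t)
    (hf'int : IntegrableOn f' (Ioo 0 T))
    (hAC : ∀ t ∈ Ico 0 T, f t = ∫ s in Ioo 0 t, f' s)
    (hineq : ∀ᵐ t ∂(volume.restrict (Ioo 0 T)),
      f' t + G t ≤ m₁ t * f t +
        m₂ t * Real.sqrt (f t * (if G t = 0 then 0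
          else G t * max 0 (Real.log (S t / G t))))) :
    ∀ t ∈ Ico 0 T, f t = 0 := by
  classical
  set Kp : ℝ → ℝ := fun x => max (m₁ x + m₂ x ^ 2 + S x) 0 with hKp
  have hKpint : IntegrableOn Kp (Ioo 0 T) := ((hm₁.add hm₂.integrable_sq).add hS).pos_part
  set k : ℝ → ℝ := (Ioo 0 T).indicator Kp with hkdef
  have hkint : Integrable k := (integrable_indicator_iff measurableSet_Ioo).2 hKpint
  have hk0 : ∀ x, 0 ≤ k x := by
    intro x
    by_cases h : x ∈ Ioo 0 T
    · rw [hkdef, indicator_of_mem h]; exact le_max_right _ _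
    · rw [hkdef, indicator_of_notMem h]
  set fp : ℝ → ℝ := (Ioo 0 T).indicator f' with hfpdef
  have hfpint : Integrable fp := (integrable_indicator_iff measurableSet_Ioo).2 hf'int
  set F : ℝ → ℝ := fun x => ∫ u in (0:ℝ)..x, fp u with hFdef
  have hFcont : Continuous F := hfpint.continuous_primitive 0
  have hF0 : F 0 = 0 := intervalIntegral.integral_same
  have hFf : ∀ x ∈ Ico 0 T, F x = f x := by
    intro x hx
    have h1 : F x = ∫ u in Ioo 0 x, fp u := by
      simp only [hFdef]
      rw [intervalIntegral.integral_of_le hx.1, integral_Ioc_eq_integral_Ioo]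
    rw [h1, hAC x hx]
    apply setIntegral_congr_fun measurableSet_Ioo
    intro u hu
    have hu' : u ∈ Ioo 0 T := ⟨hu.1, lt_trans hu.2 hx.2⟩
    exact indicator_of_mem hu' f'
  have hae : ∀ᵐ x ∂(volume.restrict (Ioo 0 T)), f' x ≤ Kp x * Om (f x) := by
    filter_upwards [hineq, ae_restrict_mem measurableSet_Ioo] with x hxineq hxmem
    have h1 : m₂ x * Real.sqrt (f x * (if G x = 0 then 0
          else G x * max 0 (Real.log (S x / G x)))) - G x ≤ (m₂ x ^ 2 + S x) * Om (f x) :=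
      key_pointwise (hm₂0 x hxmem) (hSnn x hxmem) (hG0 x hxmem) (hf0 x hxmem)
    have h2 : m₁ x * f x ≤ m₁ x * Om (f x) :=
      mul_le_mul_of_nonneg_left (le_Om (hf0 x hxmem)) (hm₁0 x hxmem)
    have h3 : 0 ≤ Om (f x) := Om_nonneg (hf0 x hxmem)
    have h4 : m₁ x + m₂ x^2 + S x ≤ Kp x := le_max_left _ _
    have h5 : (m₁ x + m₂ x^2 + S x) * Om (f x) ≤ Kp x * Om (f x) :=
      mul_le_mul_of_nonneg_right h4 h3
    nlinarith [hxineq]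
  intro t ht
  rcases eq_or_lt_of_le ht.1 with h0 | h0
  · rw [← h0, hAC 0 ⟨le_refl 0, hT⟩, Set.Ioo_self]
    exact setIntegral_empty
  have htT : t < T := ht.2
  have hIccsub : Icc (0:ℝ) t ⊆ Ico 0 T := fun x hx => ⟨hx.1, lt_of_le_of_lt hx.2 htT⟩
  have hFnn : ∀ x ∈ Icc 0 t, 0 ≤ F x := by
    intro x hx
    rw [hFf x (hIccsub hx)]
    rcases eq_or_lt_of_le hx.1 with h | h
    · rw [← h, hAC 0 ⟨le_refl 0, hT⟩, Set.Ioo_self, setIntegral_empty]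
    · exact hf0 x ⟨h, lt_of_le_of_lt hx.2 htT⟩
  obtain ⟨x₀, hx₀mem, hx₀⟩ := isCompact_Icc.exists_isMaxOn (nonempty_Icc.2 ht.1)
    hFcont.continuousOn
  have hOmFbdd : ∀ x ∈ Icc 0 t, ‖Om (F x)‖ ≤ F x₀ + 1 := by
    intro x hx
    have h1 : 0 ≤ F x := hFnn x hx
    have h2 : F x ≤ F x₀ := hx₀ hx
    have h3 := Om_nonneg h1
    have h4 := Om_le_add_one h1
    rw [Real.norm_eq_abs, abs_of_nonneg h3]
    linarith
  have hOmFmeas : Measurable (fun x => Om (F x)) := by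
    have hOmM : Measurable Om := by
      have he : Om = fun y => y + y * max 0 (Real.log y⁻¹) := by
        funext y; unfold Om; rw [one_div]
      rw [he]
      exact measurable_id.add (measurable_id.mul (measurable_const.max
        (Real.measurable_log.comp measurable_inv)))
    exact hOmM.comp hFcont.measurable
  have hOmint : ∀ s' ∈ Icc 0 t, IntegrableOn (fun x => k x * Om (F x)) (Ioo 0 s') := by
    intro s' hs'
    have hsub : Ioo 0 s' ⊆ Icc 0 t := fun x hx => ⟨hx.1.le, hx.2.le.trans hs'.2⟩
    have hb : Integrable (fun x => Om (F x) * k x) (volume.restrict (Ioo 0 s')) := by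
      apply Integrable.bdd_mul (c := F x₀ + 1) (hkint.integrableOn)
        hOmFmeas.aestronglyMeasurable
      rw [ae_restrict_iff' measurableSet_Ioo]
      exact ae_of_all _ (fun x hx => hOmFbdd x (hsub hx))
    exact hb.congr (ae_of_all _ (fun x => mul_comm _ _))
  have hineqF : ∀ s' ∈ Icc 0 t, F s' ≤ ∫ x in Ioo 0 s', k x * Om (F x) := by
    intro s' hs'
    have hsub : Ioo 0 s' ⊆ Ioo 0 T :=
      fun x hx => ⟨hx.1, hx.2.trans_le (hs'.2.trans htT.le)⟩
    rw [hFf s' (hIccsub ⟨hs'.1, hs'.2⟩), hAC s' (hIccsub ⟨hs'.1, hs'.2⟩)]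
    apply setIntegral_mono_ae_restrict (hf'int.mono_set hsub) (hOmint s' hs')
    have h := ae_restrict_of_ae_restrict_of_subset hsub hae
    filter_upwards [h, ae_restrict_mem measurableSet_Ioo] with x h1 h2
    have h3 : k x = Kp x := indicator_of_mem (hsub h2) Kp
    have h4 : F x = f x := hFf x ⟨(hsub h2).1.le, (hsub h2).2⟩
    rw [h3, h4]
    exact h1
  have hfinal := osgood t h0 k F hkint hk0 hFcont hF0 hFnn hOmint hineqF t ⟨ht.1, le_refl t⟩
  rw [← hFf t ht]
  exact hfinal
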